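/- Let ω < 0, 0 < α ≤ 1 and 0 < αγ ≤ β ≤ 1, and let A ∈ ℂ, A ≠ 0. For every s ∈ ℂ with Re(s) > 0 and 0 < |F(s)| < |A|, the transfer function H(s) = s^(β−αγ−1)·(s^α − ω)^γ / (F(s) − A) admits the convergent series representation H(s) = − Σ_{k=1}^∞ A^(−k) · s^(kβ − kαγ − 1) · (s^α − ω)^(kγ), where all powers are principal-branch complex powers. -/

import Mathlib

open Real Complex Filter Set Topology

/-- The curve parametrization Λ(θ) bounding the stability region. -/
noncomputable def Lam (α β γ ω : ℝ) (θ : ℝ) : ℂ :=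
  ((|ω| ^ (β / α) * Real.sin θ ^ (β / α - γ) * Real.sin (α * π / 2) ^ γ *
      Real.sin (α * π / 2 - θ) ^ (-(β / α)) : ℝ) : ℂ) *
    Complex.exp (Complex.I * ((γ * θ + (β - α * γ) * π / 2 : ℝ) : ℂ))

/-- The characteristic function F(s) = s^(β-αγ) (s^α - ω)^γ (principal branches). -/
noncomputable def Fc (α β γ ω : ℝ) (s : ℂ) : ℂ :=
  s ^ ((β - α * γ : ℝ) : ℂ) * (s ^ ((α : ℝ) : ℂ) - (ω : ℂ)) ^ ((γ : ℝ) : ℂ)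

/-- μ(θ) = (|ω| sin θ / sin(απ/2 - θ))^(1/α). -/
noncomputable def muP (α ω : ℝ) (θ : ℝ) : ℝ :=
  (|ω| * Real.sin θ / Real.sin (α * π / 2 - θ)) ^ (1 / α)

/-- ρ(θ) = |ω| sin(απ/2) / sin(απ/2 - θ). -/
noncomputable def rhoP (α ω : ℝ) (θ : ℝ) : ℝ :=
  |ω| * Real.sin (α * π / 2) / Real.sin (α * π / 2 - θ)

/-- The transfer function H(s) = s^(β-αγ-1)(s^α-ω)^γ / (F(s) - A). -/
noncomputable def Hc (α β γ ω : ℝ) (A : ℂ) (s : ℂ) : ℂ :=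
  s ^ ((β - α * γ - 1 : ℝ) : ℂ) * (s ^ ((α : ℝ) : ℂ) - (ω : ℂ)) ^ ((γ : ℝ) : ℂ) /
    (Fc α β γ ω s - A)

theorem H_series_small_s (α β γ ω : ℝ) (hω : ω < 0) (hα0 : 0 < α) (hα1 : α ≤ 1)
    (hαγ : 0 < α * γ) (hβ0 : α * γ ≤ β) (hβ1 : β ≤ 1) (A : ℂ) (hA : A ≠ 0) :
    ∀ s : ℂ, 0 < s.re → 0 < ‖Fc α β γ ω s‖ →
      ‖Fc α β γ ω s‖ < ‖A‖ →
      HasSum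
        (fun k : ℕ => -(A ^ (-((k : ℤ) + 1)) *
          s ^ (((k + 1 : ℕ) * β - (k + 1 : ℕ) * α * γ - 1 : ℝ) : ℂ) *
          (s ^ ((α : ℝ) : ℂ) - (ω : ℂ)) ^ (((k + 1 : ℕ) * γ : ℝ) : ℂ)))
        (Hc α β γ ω A s) := by

  intro s hs hF0 hFA
  have hsne : s ≠ 0 := fun h => by simp [h] at hs
  have hFne : Fc α β γ ω s ≠ 0 := fun h => by simp [h] at hF0
  have hAFne : Fc α β γ ω s - A ≠ 0 := by
    intro h
    have : Fc α β γ ω s = A := by linear_combination h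
    rw [this] at hFA; exact lt_irrefl _ hFA
  set F := Fc α β γ ω s with hFdef
  set r : ℂ := F / A with hr
  have hrn : ‖r‖ < 1 := by
    rw [hr, norm_div]
    rw [div_lt_one (by simpa using (hF0.trans hFA))]
    exact hFA
  have hr1 : (1 : ℂ) - r ≠ 0 := by
    intro h
    have : r = 1 := by linear_combination -h
    rw [this] at hrn; simp at hrn
  have hgeo := (hasSum_geometric_of_norm_lt_one hrn).mul_left (-(s⁻¹) * r)
  have key : ∀ k : ℕ,
      -(A ^ (-((k : ℤ) + 1)) *
          s ^ (((k + 1 : ℕ) * β - (k + 1 : ℕ) * α * γ - 1 : ℝ) : ℂ) *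
          (s ^ ((α : ℝ) : ℂ) - (ω : ℂ)) ^ (((k + 1 : ℕ) * γ : ℝ) : ℂ))
        = -(s⁻¹) * r * r ^ k := by
    intro k
    have e1 : (((k + 1 : ℕ) * β - (k + 1 : ℕ) * α * γ - 1 : ℝ) : ℂ)
        = ((k + 1 : ℕ) : ℂ) * ((β - α * γ : ℝ) : ℂ) + (-1) := by push_cast; ring
    have e2 : (((k + 1 : ℕ) * γ : ℝ) : ℂ) = ((k + 1 : ℕ) : ℂ) * ((γ : ℝ) : ℂ) := by
      push_cast; ring
    have h1 : s ^ (((k + 1 : ℕ) * β - (k + 1 : ℕ) * α * γ - 1 : ℝ) : ℂ)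
        = (s ^ ((β - α * γ : ℝ) : ℂ)) ^ (k + 1) * s⁻¹ := by
      rw [e1, Complex.cpow_add _ _ hsne, Complex.cpow_nat_mul, Complex.cpow_neg_one]
    have h2 : (s ^ ((α : ℝ) : ℂ) - (ω : ℂ)) ^ (((k + 1 : ℕ) * γ : ℝ) : ℂ)
        = ((s ^ ((α : ℝ) : ℂ) - (ω : ℂ)) ^ ((γ : ℝ) : ℂ)) ^ (k + 1) := by
      rw [e2, Complex.cpow_nat_mul]
    have hAz : A ^ (-((k : ℤ) + 1)) = (A ^ (k + 1))⁻¹ := by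
      rw [zpow_neg, ← zpow_natCast]; push_cast; ring_nf
    rw [h1, h2, hAz]
    have hFk : r ^ (k + 1) = F ^ (k + 1) * (A ^ (k + 1))⁻¹ := by
      rw [hr, div_pow, div_eq_mul_inv]
    have hFe : F ^ (k + 1) = (s ^ ((β - α * γ : ℝ) : ℂ)) ^ (k + 1) *
        ((s ^ ((α : ℝ) : ℂ) - (ω : ℂ)) ^ ((γ : ℝ) : ℂ)) ^ (k + 1) := by
      rw [hFdef, Fc, mul_pow]
    have : -(s⁻¹) * r * r ^ k = -(s⁻¹) * r ^ (k + 1) := by ring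
    rw [this, hFk, hFe]; ring
  have hval : -(s⁻¹) * r * (1 - r)⁻¹ = Hc α β γ ω A s := by
    have hnum : s ^ ((β - α * γ - 1 : ℝ) : ℂ)
        = s ^ ((β - α * γ : ℝ) : ℂ) * s⁻¹ := by
      have : ((β - α * γ - 1 : ℝ) : ℂ) = ((β - α * γ : ℝ) : ℂ) + (-1) := by push_cast; ring
      rw [this, Complex.cpow_add _ _ hsne, Complex.cpow_neg_one]
    have hHc : Hc α β γ ω A s = F * s⁻¹ / (F - A) := by
      rw [Hc, hnum, hFdef, Fc]; ring
    have hAF : A - F ≠ 0 := fun h => hAFne (by linear_combination -h)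
    have h1 : (1 : ℂ) - F / A = (A - F) / A := by field_simp
    rw [hHc, hr, h1]
    field_simp
    ring
  rw [← hval]
  exact hgeo.congr_fun key
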